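/- The class of morphisms having the left lifting property with respect to a fixed class S of morphisms is closed under transfinite composition: if X : α → C is a transfinite sequence all of whose successor maps X(γ → γ+1) have the left lifting property with respect to S, then the canonical map X_0 → colim_{γ<α} X_γ also has the left lifting property with respect to S. -/

import Mathlib

open CategoryTheory Limits

universe w v u

/-- The ordinal `α` viewed as a thin category: the order type of the ordinals
less than `α`. -/
abbrev OrdIdx (α : Ordinal.{w}) : Type (w + 1) := {γ : Ordinal.{w} // γ < α}

/-- The inclusion `OrdIdx β ⥤ OrdIdx α` for `β ≤ α`. -/
def ordIncl {β α : Ordinal.{w}} (h : β ≤ α) : OrdIdx β ⥤ OrdIdx α :=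
  Monotone.functor (f := fun γ => (⟨γ.1, lt_of_lt_of_le γ.2 h⟩ : OrdIdx α))
    (fun _ _ hle => hle)

/-- The canonical cocone over the restriction of `X : OrdIdx α ⥤ C` to the
ordinals below `β < α`, with apex `X.obj β`. -/
def restrictionCocone {C : Type u} [Category.{v} C] {α : Ordinal.{w}}
    (X : OrdIdx α ⥤ C) (β : Ordinal.{w}) (hβ : β < α) :
    Cocone (ordIncl hβ.le ⋙ X) where
  pt := X.obj ⟨β, hβ⟩
  ι :=
    { app := fun γ => X.map (homOfLE (le_of_lt (show (γ.1 : Ordinal.{w}) < β from γ.2)))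
      naturality := by
        intro i j f
        dsimp [ordIncl]
        rw [← X.map_comp, Category.comp_id]
        rfl }

/-- A transfinite sequence: a functor from the ordinal `α` (as a thin
category) which is continuous at every nonzero limit ordinal `β < α`, i.e.
`X_β = colim_{γ<β} X_γ`. -/
def IsTransfiniteSeq {C : Type u} [Category.{v} C] {α : Ordinal.{w}}
    (X : OrdIdx α ⥤ C) : Prop :=
  ∀ (β : Ordinal.{w}) (hβ : β < α), Order.IsSuccLimit β →
    Nonempty (IsColimit (restrictionCocone X β hβ))

namespace TC

variable {C : Type u} [Category.{v} C] {α : Ordinal.{w}} (hα : 0 < α)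
  (X : OrdIdx α ⥤ C) [HasColimit X] {A B : C} (g : A ⟶ B)
  (u : X.obj ⟨0, hα⟩ ⟶ A) (v : colimit X ⟶ B)

/-- Partial lift: a compatible family of maps `X γ ⟶ A` for `γ < δ`. -/
structure PL where
  δ : Ordinal.{w}
  hδ : δ ≤ α
  hpos : 0 < δ
  t : ∀ (γ : OrdIdx α), γ.1 < δ → (X.obj γ ⟶ A)
  ht0 : t ⟨0, hα⟩ hpos = u
  compat : ∀ (γ γ' : OrdIdx α) (hle : γ ≤ γ') (h' : γ'.1 < δ),
    X.map (homOfLE hle) ≫ t γ' h' = t γ (lt_of_le_of_lt (Subtype.coe_le_coe.mpr hle) h')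
  hg : ∀ γ h, t γ h ≫ g = colimit.ι X γ ≫ v

def PLle (p q : PL hα X g u v) : Prop :=
  p.δ ≤ q.δ ∧ ∀ γ (hp : γ.1 < p.δ) (hq : γ.1 < q.δ), q.t γ hq = p.t γ hp

variable (hsq : u ≫ g = colimit.ι X ⟨0, hα⟩ ≫ v)

def PLone : PL hα X g u v where
  δ := 1
  hδ := Order.one_le_iff_pos.mpr hα
  hpos := zero_lt_one
  t γ h := X.map (homOfLE (show γ ≤ ⟨0, hα⟩ from
    Subtype.coe_le_coe.mp (le_of_eq (Ordinal.lt_one_iff_zero.mp h)))) ≫ u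
  ht0 := by
    show X.map (homOfLE _) ≫ u = u
    rw [Subsingleton.elim (homOfLE _) (𝟙 (⟨0, hα⟩ : OrdIdx α)), X.map_id, Category.id_comp]
  compat := by
    intro γ γ' hle h'
    rw [← Category.assoc, ← X.map_comp, homOfLE_comp]
  hg := by
    intro γ h
    rw [Category.assoc, hsq, ← Category.assoc, colimit.w]

theorem chain_bdd (c : Set (PL hα X g u v)) (hcc : IsChain (PLle hα X g u v) c)
    (hne : c.Nonempty) : ∃ ub, ∀ p ∈ c, PLle hα X g u v p ub := by
  classical
  set D := sSup (PL.δ '' c) with hD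
  have bdd : BddAbove (PL.δ '' c) := ⟨α, by rintro _ ⟨p, hp, rfl⟩; exact p.hδ⟩
  obtain ⟨p0, hp0⟩ := hne
  have hDα : D ≤ α := csSup_le ⟨_, ⟨p0, hp0, rfl⟩⟩ (by rintro _ ⟨p, hp, rfl⟩; exact p.hδ)
  have hD0 : 0 < D := lt_of_lt_of_le p0.hpos (le_csSup bdd ⟨p0, hp0, rfl⟩)
  have hneim : (PL.δ '' c).Nonempty := ⟨p0.δ, p0, hp0, rfl⟩
  have key : ∀ (γ : OrdIdx α), γ.1 < D → ∃ p, p ∈ c ∧ γ.1 < p.δ := by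
    intro γ h
    by_contra hcon
    push_neg at hcon
    exact absurd (csSup_le hneim
      (by rintro _ ⟨p, hp, rfl⟩; exact hcon p hp)) (not_le.mpr h)
  choose P hPc hPδ using key
  have agree : ∀ (p q : PL hα X g u v), p ∈ c → q ∈ c → ∀ γ (h1 : γ.1 < p.δ)
      (h2 : γ.1 < q.δ), p.t γ h1 = q.t γ h2 := by
    intro p q hp hq γ h1 h2
    rcases eq_or_ne p q with rfl | hne'
    · rfl
    · rcases hcc hp hq hne' with h | h
      · exact (h.2 γ h1 h2).symm
      · exact h.2 γ h2 h1
  refine ⟨⟨D, hDα, hD0, fun γ h => (P γ h).t γ (hPδ γ h), ?_, ?_, ?_⟩, ?_⟩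
  · exact ((P ⟨0, hα⟩ hD0).ht0)
  · intro γ γ' hle h'
    have h1 : γ.1 < (P γ' h').δ :=
      lt_of_le_of_lt (Subtype.coe_le_coe.mpr hle) (hPδ γ' h')
    rw [(P γ' h').compat γ γ' hle (hPδ γ' h')]
    exact agree _ _ (hPc γ' h') (hPc γ _) γ h1 _
  · intro γ h
    exact (P γ h).hg γ _
  · intro p hp
    refine ⟨le_csSup bdd ⟨p, hp, rfl⟩, fun γ h1 h2 => ?_⟩
    exact agree _ _ (hPc γ h2) hp γ _ h1

/-- existence of the next map, by cases on whether `β` is a successor or limit. -/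
theorem exists_next
    (hseq : ∀ (β : Ordinal.{w}) (hβ : β < α), Order.IsSuccLimit β →
      Nonempty (IsColimit (restrictionCocone X β hβ)))
    (hllp : ∀ (γ : Ordinal.{w}) (h : γ + 1 < α),
      HasLiftingProperty (X.map (homOfLE
        (show (⟨γ, lt_of_le_of_lt (le_self_add (a := γ) (b := 1)) h⟩ : OrdIdx α) ≤
            ⟨γ + 1, h⟩ from Subtype.mk_le_mk.mpr (le_self_add (a := γ) (b := 1))))) g)
    (β : Ordinal.{w}) (hβ : β < α) (hβ0 : 0 < β)
    (t : ∀ (γ : OrdIdx α), γ.1 < β → (X.obj γ ⟶ A))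
    (compat : ∀ (γ γ' : OrdIdx α) (hle : γ ≤ γ') (h' : γ'.1 < β),
      X.map (homOfLE hle) ≫ t γ' h' = t γ (lt_of_le_of_lt (Subtype.coe_le_coe.mpr hle) h'))
    (hg : ∀ γ h, t γ h ≫ g = colimit.ι X γ ≫ v) :
    ∃ l : X.obj ⟨β, hβ⟩ ⟶ A,
      (∀ (γ : OrdIdx α) (hγ : γ.1 < β),
        X.map (homOfLE (show γ ≤ ⟨β, hβ⟩ from Subtype.coe_le_coe.mp hγ.le)) ≫ l = t γ hγ) ∧
      l ≫ g = colimit.ι X ⟨β, hβ⟩ ≫ v := by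
  rcases Ordinal.zero_or_succ_or_isSuccLimit β with rfl | ⟨β', hβ'⟩ | hlim
  · exact absurd hβ0 (lt_irrefl 0)
  · -- successor case
    have hs : β = β' + 1 := by rw [Ordinal.add_one_eq_succ]; exact hβ'.symm
    subst hs
    haveI := hllp β' hβ
    have hβ'lt : (β' : Ordinal.{w}) < β' + 1 := by
      rw [Ordinal.add_one_eq_succ]; exact Order.lt_succ β'
    have hw : t ⟨β', lt_trans hβ'lt hβ⟩ hβ'lt ≫ g =
        X.map (homOfLE (show (⟨β', lt_of_le_of_lt (le_self_add (a := β') (b := 1)) hβ⟩ : OrdIdx α) ≤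
            ⟨β' + 1, hβ⟩ from Subtype.mk_le_mk.mpr (le_self_add (a := β') (b := 1)))) ≫
          (colimit.ι X ⟨β' + 1, hβ⟩ ≫ v) := by
      rw [hg, ← Category.assoc, colimit.w]
    have sq : CommSq (t ⟨β', lt_trans hβ'lt hβ⟩ hβ'lt)
        (X.map (homOfLE (show (⟨β', lt_of_le_of_lt (le_self_add (a := β') (b := 1)) hβ⟩ : OrdIdx α) ≤
            ⟨β' + 1, hβ⟩ from Subtype.mk_le_mk.mpr (le_self_add (a := β') (b := 1)))))
        g (colimit.ι X ⟨β' + 1, hβ⟩ ≫ v) := ⟨hw⟩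
    refine ⟨sq.lift, ?_, sq.fac_right⟩
    intro γ hγ
    have hγβ' : γ ≤ (⟨β', lt_trans hβ'lt hβ⟩ : OrdIdx α) := by
      refine Subtype.coe_le_coe.mp ?_
      have := hγ
      rw [Ordinal.add_one_eq_succ] at this
      exact Order.lt_succ_iff.mp this
    calc X.map (homOfLE _) ≫ sq.lift
        = (X.map (homOfLE hγβ') ≫ X.map (homOfLE
            (show (⟨β', lt_of_le_of_lt (le_self_add (a := β') (b := 1)) hβ⟩ : OrdIdx α) ≤
              ⟨β' + 1, hβ⟩ from Subtype.mk_le_mk.mpr (le_self_add (a := β') (b := 1))))) ≫ sq.lift := by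
          rw [← X.map_comp, homOfLE_comp]
      _ = X.map (homOfLE hγβ') ≫ (X.map (homOfLE _) ≫ sq.lift) := by
          rw [Category.assoc]
      _ = X.map (homOfLE hγβ') ≫ t ⟨β', lt_trans hβ'lt hβ⟩ hβ'lt := by rw [sq.fac_left]
      _ = t γ hγ := compat γ _ hγβ' hβ'lt
  · -- limit case
    obtain ⟨hc⟩ := hseq β hβ hlim
    let cocone : Cocone (ordIncl hβ.le ⋙ X) :=
      { pt := A
        ι :=
          { app := fun γ' => t ⟨γ'.1, lt_trans γ'.2 hβ⟩ γ'.2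
            naturality := by
              intro i j f
              dsimp [ordIncl]
              refine Eq.trans ?_ (Category.comp_id _).symm
              exact compat _ _ (leOfHom f) j.2 } }
    refine ⟨hc.desc cocone, ?_, ?_⟩
    · intro γ hγ
      exact hc.fac cocone ⟨γ.1, hγ⟩
    · refine hc.hom_ext fun γ' => ?_
      refine ((Category.assoc _ _ _).symm.trans (congrArg (· ≫ g) (hc.fac cocone γ'))).trans ?_
      show t ⟨γ'.1, _⟩ γ'.2 ≫ g = X.map (homOfLE _) ≫ colimit.ι X ⟨β, hβ⟩ ≫ v
      rw [hg, ← Category.assoc, colimit.w]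

theorem exists_family
    (hseq : ∀ (β : Ordinal.{w}) (hβ : β < α), Order.IsSuccLimit β →
      Nonempty (IsColimit (restrictionCocone X β hβ)))
    (hllp : ∀ (γ : Ordinal.{w}) (h : γ + 1 < α),
      HasLiftingProperty (X.map (homOfLE
        (show (⟨γ, lt_of_le_of_lt (le_self_add (a := γ) (b := 1)) h⟩ : OrdIdx α) ≤
            ⟨γ + 1, h⟩ from Subtype.mk_le_mk.mpr (le_self_add (a := γ) (b := 1))))) g)
    (hsq : u ≫ g = colimit.ι X ⟨0, hα⟩ ≫ v) :
    ∃ T : ∀ γ : OrdIdx α, X.obj γ ⟶ A,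
      T ⟨0, hα⟩ = u ∧
      (∀ (γ γ' : OrdIdx α) (hle : γ ≤ γ'), X.map (homOfLE hle) ≫ T γ' = T γ) ∧
      (∀ γ, T γ ≫ g = colimit.ι X γ ≫ v) := by
  haveI : Nonempty (PL hα X g u v) := ⟨PLone hα X g u v hsq⟩
  obtain ⟨m, hm⟩ := exists_maximal_of_nonempty_chains_bounded
    (r := PLle hα X g u v)
    (fun c hcc hne => chain_bdd hα X g u v c hcc hne)
    (fun hab hbc => ⟨hab.1.trans hbc.1, fun γ h1 h3 => by
      rw [hbc.2 γ (lt_of_lt_of_le h1 hab.1) h3, hab.2 γ h1 _]⟩)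
  have hδα : m.δ = α := by
    by_contra hne'
    have hlt : m.δ < α := lt_of_le_of_ne m.hδ hne'
    obtain ⟨l, hl1, hl2⟩ := exists_next X g v hseq hllp m.δ hlt m.hpos m.t m.compat m.hg
    have hβ1 : m.δ + 1 ≤ α := by
      rw [Ordinal.add_one_eq_succ]; exact Order.succ_le_of_lt hlt
    have hsucc : m.δ < m.δ + 1 := by
      rw [Ordinal.add_one_eq_succ]; exact Order.lt_succ m.δ
    have hle' : ∀ (γ : OrdIdx α), γ.1 < m.δ + 1 → γ ≤ (⟨m.δ, hlt⟩ : OrdIdx α) := by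
      intro γ h
      refine Subtype.coe_le_coe.mp ?_
      rw [Ordinal.add_one_eq_succ] at h
      exact Order.lt_succ_iff.mp h
    let e : PL hα X g u v :=
      { δ := m.δ + 1
        hδ := hβ1
        hpos := lt_of_lt_of_le m.hpos (le_self_add (a := m.δ) (b := 1))
        t := fun γ h => X.map (homOfLE (hle' γ h)) ≫ l
        ht0 := (hl1 ⟨0, hα⟩ m.hpos).trans m.ht0
        compat := by
          intro γ γ' hle h'
          rw [← Category.assoc, ← X.map_comp, homOfLE_comp]
        hg := fun γ h => by rw [Category.assoc, hl2, ← Category.assoc, colimit.w] }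
    have hme : PLle hα X g u v m e := by
      refine ⟨le_of_lt hsucc, fun γ h1 h2 => ?_⟩
      show X.map (homOfLE (hle' γ h2)) ≫ l = m.t γ h1
      exact hl1 γ h1
    exact absurd (hm e hme).1 (not_le.mpr hsucc)
  refine ⟨fun γ => m.t γ (lt_of_lt_of_eq γ.2 hδα.symm), ?_, ?_, ?_⟩
  · exact m.ht0
  · intro γ γ' hle
    exact m.compat γ γ' hle _
  · intro γ
    exact m.hg γ _

end TC

/-- The class of morphisms with the left lifting property with
respect to a fixed class `S` of morphisms is closed under transfinite
composition: if every successor map of a transfinite sequence `X` has the left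
lifting property with respect to every morphism in `S`, then so does the
canonical map `X_0 → colim_{γ<α} X_γ`. -/
theorem stmt_3 {C : Type u} [Category.{v} C] (S : MorphismProperty C)
    (α : Ordinal.{w}) (hα : 0 < α)
    (X : OrdIdx α ⥤ C) (hseq : IsTransfiniteSeq X)
    (hllp : ∀ (γ : Ordinal.{w}) (h : γ + 1 < α) ⦃A B : C⦄ (g : A ⟶ B), S g →
      HasLiftingProperty (X.map (homOfLE
        (show (⟨γ, lt_of_le_of_lt (le_self_add (a := γ) (b := 1)) h⟩ : OrdIdx α) ≤
            ⟨γ + 1, h⟩ from Subtype.mk_le_mk.mpr (le_self_add (a := γ) (b := 1))))) g)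
    [HasColimit X] :
    ∀ ⦃A B : C⦄ (g : A ⟶ B), S g →
      HasLiftingProperty (colimit.ι X ⟨0, hα⟩) g := by
  intro A B g hSg
  constructor
  intro u' v' sq
  obtain ⟨T, hT0, hTc, hTg⟩ := TC.exists_family hα X g u' v' hseq
    (fun γ h => hllp γ h g hSg) sq.w
  let cone : Cocone X :=
    { pt := A
      ι :=
        { app := T
          naturality := by
            intro γ γ' f
            have := hTc γ γ' (leOfHom f)
            rw [Subsingleton.elim (homOfLE (leOfHom f)) f] at this
            simpa using this } }
  refine ⟨⟨⟨colimit.desc X cone, ?_, ?_⟩⟩⟩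
  · rw [colimit.ι_desc]
    exact hT0
  · refine colimit.hom_ext fun γ => ?_
    rw [← Category.assoc, colimit.ι_desc]
    exact hTg γ
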